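/- Let (C_k)_{k≥0} be a sequence of Laurent polynomials with integer coefficients such that there exist positive constants A, B, D with ℓ¹-norm ‖C_k‖₁ ≤ e^{A k + B log k} and support of C_k contained in [−D k², D k²] for all k ≥ 1. Define f_n(α) = ∑_{k=0}^{n} K(n,k,α) · C_k(e^{α/n}) for integers n ≥ 1 and α ∈ ℂ, where K(n,k,α) = ∏_{j=1}^{k} ((e^{α/2} − e^{−α/2})² − (e^{jα/(2n)} − e^{−jα/(2n)})²), and let g(α) = ∑_{k=0}^{∞} C_k(1) · (e^{α/2} − e^{−α/2})^{2k}, which converges on some open neighborhood of 0. Then for every integer m ≥ 0 the limit lim_{n→∞} f_n^{(m)}(0) exists and equals g^{(m)}(0), the m-th complex derivative of g at 0. -/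

import Mathlib

/-- The evaluation of an integer Laurent polynomial (a finitely supported function `ℤ → ℤ`)
at a complex number `q`: `∑_j a_j q^j`. -/
noncomputable def laurentEval (c : ℤ →₀ ℤ) (q : ℂ) : ℂ :=
  ∑ j ∈ c.support, (c j : ℂ) * q ^ j

/-- The ℓ¹-norm of an integer Laurent polynomial: `∑_j |a_j|`. -/
noncomputable def laurentL1 (c : ℤ →₀ ℤ) : ℝ :=
  ∑ j ∈ c.support, |(c j : ℝ)|

/-- The evaluation of the cyclotomic kernel `C_{n,k}` at `q = e^{α/n}`:
`K(n,k,α) = ∏_{j=1}^{k} ((e^{α/2} − e^{−α/2})² − (e^{jα/(2n)} − e^{−jα/(2n)})²)`. -/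
noncomputable def cycKer (n k : ℕ) (α : ℂ) : ℂ :=
  ∏ j ∈ Finset.Icc 1 k,
    ((Complex.exp (α / 2) - Complex.exp (-α / 2)) ^ 2
      - (Complex.exp ((j : ℂ) * α / (2 * n)) - Complex.exp (-((j : ℂ) * α / (2 * n)))) ^ 2)

open Filter Finset

lemma mmr_norm_exp_le (z : ℂ) : ‖Complex.exp z‖ ≤ Real.exp ‖z‖ := by
  rw [Complex.norm_exp]
  exact Real.exp_le_exp.mpr (Complex.re_le_norm z)

lemma mmr_exp_sub_one (z : ℂ) : ‖Complex.exp z - 1‖ ≤ ‖z‖ * Real.exp ‖z‖ := by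
  have hconv : Convex ℝ (Metric.closedBall (0:ℂ) ‖z‖) := convex_closedBall _ _
  have h := hconv.norm_image_sub_le_of_norm_hasDerivWithin_le
    (f := Complex.exp) (f' := Complex.exp)
    (fun x _ => (Complex.hasDerivAt_exp x).hasDerivWithinAt)
    (fun x hx => by
      have hx' : ‖x‖ ≤ ‖z‖ := by simpa using Metric.mem_closedBall.mp hx
      exact (mmr_norm_exp_le x).trans (Real.exp_le_exp.mpr hx'))
    (Metric.mem_closedBall_self (norm_nonneg z))
    (y := z) (by simp)
  simpa [Complex.exp_zero, mul_comm] using h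

lemma mmr_te_mono {t T : ℝ} (h0 : 0 ≤ t) (h : t ≤ T) : t * Real.exp t ≤ T * Real.exp T :=
  mul_le_mul h (Real.exp_le_exp.mpr h) (Real.exp_pos t).le (le_trans h0 h)

lemma mmr_sinh_bound (z : ℂ) (hz : ‖z‖ ≤ 1) :
    ‖Complex.exp (z / 2) - Complex.exp (-z / 2)‖ ≤ 8 * ‖z‖ := by
  have hfac : Complex.exp (z / 2) - Complex.exp (-z / 2)
      = Complex.exp (-z / 2) * (Complex.exp z - 1) := by
    rw [mul_sub, ← Complex.exp_add, mul_one]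
    congr 2
    ring
  rw [hfac, norm_mul]
  have h1 : ‖Complex.exp (-z / 2)‖ ≤ Real.exp 1 := by
    refine (mmr_norm_exp_le _).trans (Real.exp_le_exp.mpr ?_)
    rw [neg_div, norm_neg, norm_div]
    simp only [Complex.norm_ofNat]
    nlinarith [norm_nonneg z]
  have h2 : ‖Complex.exp z - 1‖ ≤ ‖z‖ * Real.exp 1 :=
    (mmr_exp_sub_one z).trans
      (mul_le_mul_of_nonneg_left (Real.exp_le_exp.mpr hz) (norm_nonneg z))
  have he : Real.exp 1 < 2.7182818286 := Real.exp_one_lt_d9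
  have he0 : 0 < Real.exp 1 := Real.exp_pos 1
  have he2 : Real.exp 1 * Real.exp 1 < 8 := by nlinarith
  calc ‖Complex.exp (-z / 2)‖ * ‖Complex.exp z - 1‖
      ≤ Real.exp 1 * (‖z‖ * Real.exp 1) :=
        mul_le_mul h1 h2 (norm_nonneg _) he0.le
    _ ≤ 8 * ‖z‖ := by nlinarith [norm_nonneg z]

lemma mmr_laurent_one (c : ℤ →₀ ℤ) : ‖laurentEval c 1‖ ≤ laurentL1 c := by
  unfold laurentEval laurentL1
  refine (norm_sum_le _ _).trans (Finset.sum_le_sum fun j _ => ?_)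
  rw [one_zpow, mul_one]
  simp

lemma mmr_laurent_exp_bound (c : ℤ →₀ ℤ) (x : ℂ) (J : ℝ)
    (hsup : ∀ j ∈ c.support, |(j : ℝ)| ≤ J) :
    ‖laurentEval c (Complex.exp x)‖ ≤ laurentL1 c * Real.exp (J * ‖x‖) := by
  unfold laurentEval laurentL1
  rw [Finset.sum_mul]
  refine (norm_sum_le _ _).trans (Finset.sum_le_sum fun j hj => ?_)
  rw [← Complex.exp_int_mul, norm_mul]
  have h1 : ‖((c j : ℤ) : ℂ)‖ = |(c j : ℝ)| := by simp
  rw [h1]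
  refine mul_le_mul_of_nonneg_left ?_ (abs_nonneg _)
  refine (mmr_norm_exp_le _).trans (Real.exp_le_exp.mpr ?_)
  rw [norm_mul]
  have h2 : ‖((j : ℤ) : ℂ)‖ = |(j : ℝ)| := by simp
  rw [h2]
  exact mul_le_mul_of_nonneg_right (hsup j hj) (norm_nonneg x)

lemma mmr_laurent_exp_sub_one (c : ℤ →₀ ℤ) (x : ℂ) (J : ℝ)
    (hsup : ∀ j ∈ c.support, |(j : ℝ)| ≤ J) :
    ‖laurentEval c (Complex.exp x) - laurentEval c 1‖
      ≤ laurentL1 c * (J * ‖x‖ * Real.exp (J * ‖x‖)) := by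
  unfold laurentEval laurentL1
  rw [← Finset.sum_sub_distrib, Finset.sum_mul]
  refine (norm_sum_le _ _).trans (Finset.sum_le_sum fun j hj => ?_)
  rw [one_zpow, ← mul_sub, ← Complex.exp_int_mul, norm_mul]
  have h1 : ‖((c j : ℤ) : ℂ)‖ = |(c j : ℝ)| := by simp
  rw [h1]
  refine mul_le_mul_of_nonneg_left ?_ (abs_nonneg _)
  refine (mmr_exp_sub_one _).trans ?_
  have hn : ‖((j : ℤ) : ℂ) * x‖ = |(j : ℝ)| * ‖x‖ := by rw [norm_mul]; simp
  rw [hn]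
  exact mmr_te_mono (mul_nonneg (abs_nonneg _) (norm_nonneg _))
    (mul_le_mul_of_nonneg_right (hsup j hj) (norm_nonneg x))

lemma mmr_prod_sub_pow (k : ℕ) (a : ℕ → ℂ) (b : ℂ) (M ε : ℝ) (hM : 0 ≤ M) (hε : 0 ≤ ε)
    (hb : ‖b‖ ≤ M) (ha : ∀ j ∈ Finset.Icc 1 k, ‖a j‖ ≤ M)
    (hab : ∀ j ∈ Finset.Icc 1 k, ‖a j - b‖ ≤ ε) :
    ‖(∏ j ∈ Finset.Icc 1 k, a j) - b ^ k‖ ≤ k * ε * M ^ (k - 1) := by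
  induction k with
  | zero => simp
  | succ k ih =>
    have hstep : (∏ j ∈ Finset.Icc 1 (k + 1), a j)
        = (∏ j ∈ Finset.Icc 1 k, a j) * a (k + 1) :=
      Finset.prod_Icc_succ_top (Nat.le_add_left 1 k) a
    have hsub : ∀ j, j ∈ Finset.Icc 1 k → j ∈ Finset.Icc 1 (k + 1) := by
      intro j hj
      simp only [Finset.mem_Icc] at hj ⊢
      omega
    have h1 := ih (fun j hj => ha j (hsub j hj)) (fun j hj => hab j (hsub j hj))
    have ha2 : ‖a (k + 1)‖ ≤ M := ha _ (by simp)
    have hab2 : ‖a (k + 1) - b‖ ≤ ε := hab _ (by simp)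
    have hdec : (∏ j ∈ Finset.Icc 1 k, a j) * a (k + 1) - b ^ (k + 1)
        = ((∏ j ∈ Finset.Icc 1 k, a j) - b ^ k) * a (k + 1) + b ^ k * (a (k + 1) - b) := by
      ring
    rw [hstep, hdec]
    have hbk : ‖b ^ k‖ ≤ M ^ k := by
      rw [norm_pow]; exact pow_le_pow_left₀ (norm_nonneg b) hb k
    have step1 : ‖((∏ j ∈ Finset.Icc 1 k, a j) - b ^ k) * a (k + 1)
          + b ^ k * (a (k + 1) - b)‖
        ≤ (k * ε * M ^ (k - 1)) * M + M ^ k * ε := by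
      refine (norm_add_le _ _).trans (add_le_add ?_ ?_)
      · rw [norm_mul]
        exact mul_le_mul h1 ha2 (norm_nonneg _) (by positivity)
      · rw [norm_mul]
        exact mul_le_mul hbk hab2 (norm_nonneg _) (by positivity)
    refine step1.trans ?_
    have hkey : (k : ℝ) * ε * M ^ (k - 1) * M ≤ k * ε * M ^ k := by
      rcases Nat.eq_zero_or_pos k with rfl | hk
      · simp
      · have hpow : M ^ (k - 1) * M = M ^ k := by
          rw [← pow_succ]
          congr 1
          omega
        rw [mul_assoc, hpow]
    push_cast
    nlinarith [pow_nonneg hM k]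

lemma mmr_entire_deriv {h : ℂ → ℂ} (hd : Differentiable ℂ h) : Differentiable ℂ (deriv h) := by
  have ha : AnalyticOnNhd ℂ h Set.univ := fun z _ => hd.analyticAt z
  exact fun z => (ha.deriv z trivial).differentiableAt

lemma mmr_entire_iteratedDeriv {h : ℂ → ℂ} (hd : Differentiable ℂ h) (m : ℕ) :
    Differentiable ℂ (iteratedDeriv m h) := by
  induction m with
  | zero => simpa [iteratedDeriv_zero] using hd
  | succ m ih => rw [iteratedDeriv_succ]; exact mmr_entire_deriv ih

lemma mmr_f_diff (C : ℕ → (ℤ →₀ ℤ)) (n : ℕ) :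
    Differentiable ℂ (fun α => ∑ k ∈ Finset.range (n + 1),
      cycKer n k α * laurentEval (C k) (Complex.exp (α / n))) := by
  apply Differentiable.fun_sum
  intro k _
  apply Differentiable.mul
  · unfold cycKer
    apply Differentiable.fun_finset_prod
    intro j _
    apply Differentiable.sub
    · exact ((Complex.differentiable_exp.comp (differentiable_id.div_const 2)).sub
        (Complex.differentiable_exp.comp (differentiable_id.neg.div_const 2))).pow 2
    · exact ((Complex.differentiable_exp.comp
          ((differentiable_id.const_mul _).div_const _)).sub
        (Complex.differentiable_exp.comp
          (((differentiable_id.const_mul _).div_const _).neg))).pow 2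
  · unfold laurentEval
    apply Differentiable.fun_sum
    intro j _
    apply Differentiable.const_mul
    have hre : (fun α : ℂ => Complex.exp (α / ↑n) ^ j)
        = fun α : ℂ => Complex.exp (↑j * (α / ↑n)) := by
      funext α
      rw [Complex.exp_int_mul]
    rw [hre]
    exact Complex.differentiable_exp.comp ((differentiable_id.div_const _).const_mul _)

lemma mmr_iterated_tendsto {f : ℕ → ℂ → ℂ} {g : ℂ → ℂ} {U : Set ℂ} (hU : IsOpen U)
    (hfd : ∀ n, Differentiable ℂ (f n))
    (htlu : TendstoLocallyUniformlyOn f g atTop U) (m : ℕ) :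
    TendstoLocallyUniformlyOn (fun n => iteratedDeriv m (f n)) (iteratedDeriv m g) atTop U := by
  induction m with
  | zero => simpa [iteratedDeriv_zero] using htlu
  | succ m ih =>
    have hd : ∀ᶠ n in atTop, DifferentiableOn ℂ (iteratedDeriv m (f n)) U :=
      Filter.Eventually.of_forall fun n => (mmr_entire_iteratedDeriv (hfd n) m).differentiableOn
    have h2 := ih.deriv hd hU
    simpa [iteratedDeriv_succ, Function.comp_def] using h2

lemma mmr_core {A D w u : ℝ} (hu : 0 ≤ u) (hw : u * Real.exp (A + D) = w) {B : ℝ}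
    {p : ℕ} (hp : B ≤ p) (k : ℕ) (hk : 1 ≤ k) (j : ℕ) (hj : j ≤ 3) :
    Real.exp (A * k + B * Real.log k) * Real.exp (D * k) * u ^ k * (k : ℝ) ^ j
      ≤ (k : ℝ) ^ (p + 3) * w ^ k := by
  have hk1 : (1:ℝ) ≤ (k:ℝ) := by exact_mod_cast hk
  have hk0 : (0:ℝ) < k := by linarith
  have hw0 : 0 ≤ w := by rw [← hw]; positivity
  have e1 : Real.exp (A * k + B * Real.log k) * Real.exp (D * k)
      = Real.exp ((A + D) * k) * Real.exp (B * Real.log k) := by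
    rw [← Real.exp_add, ← Real.exp_add]
    ring_nf
  have e2 : Real.exp (B * Real.log k) = (k:ℝ) ^ (B : ℝ) := by
    rw [Real.rpow_def_of_pos hk0, mul_comm]
  have e5 : Real.exp ((A + D) * k) * u ^ k = w ^ k := by
    rw [mul_comm (A + D) (k:ℝ), Real.exp_nat_mul, ← mul_pow, mul_comm (Real.exp _) u, hw]
  have e3 : (k:ℝ) ^ (B:ℝ) ≤ (k:ℝ) ^ (p:ℕ) := by
    calc (k:ℝ) ^ (B:ℝ) ≤ (k:ℝ) ^ ((p:ℕ):ℝ) := Real.rpow_le_rpow_of_exponent_le hk1 hp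
      _ = (k:ℝ) ^ (p:ℕ) := Real.rpow_natCast _ p
  have e4 : (k:ℝ) ^ j ≤ (k:ℝ) ^ 3 := pow_le_pow_right₀ hk1 hj
  calc Real.exp (A * k + B * Real.log k) * Real.exp (D * k) * u ^ k * (k : ℝ) ^ j
      = (Real.exp ((A + D) * k) * u ^ k) * (Real.exp (B * Real.log k) * (k:ℝ) ^ j) := by
        rw [e1]; ring
    _ = w ^ k * ((k:ℝ) ^ (B:ℝ) * (k:ℝ) ^ j) := by rw [e5, e2]
    _ ≤ w ^ k * ((k:ℝ) ^ (p:ℕ) * (k:ℝ) ^ 3) := by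
        refine mul_le_mul_of_nonneg_left ?_ (pow_nonneg hw0 k)
        exact mul_le_mul e3 e4 (by positivity) (by positivity)
    _ = (k:ℝ) ^ (p + 3) * w ^ k := by rw [pow_add]; ring

lemma mmr_L1_nonneg (c : ℤ →₀ ℤ) : 0 ≤ laurentL1 c :=
  Finset.sum_nonneg fun _ _ => abs_nonneg _

set_option maxHeartbeats 1600000 in
lemma mmr_term_bound (C : ℕ → (ℤ →₀ ℤ)) (A B D : ℝ) (hD : 0 < D)
    (hnorm : ∀ k : ℕ, 1 ≤ k → laurentL1 (C k) ≤ Real.exp (A * k + B * Real.log k))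
    (hsupp : ∀ k : ℕ, 1 ≤ k → ∀ j ∈ (C k).support, |(j : ℝ)| ≤ D * (k : ℝ) ^ 2)
    (r u w : ℝ) (p : ℕ) (hr0 : 0 < r) (hr1 : r ≤ 1) (hu : u = 128 * r ^ 2)
    (hw : u * Real.exp (A + D) = w) (hp : B ≤ p)
    (n k : ℕ) (hn : 1 ≤ n) (hk : 1 ≤ k) (hkn : k ≤ n) (x : ℂ) (hx : ‖x‖ ≤ r) :
    ‖cycKer n k x * laurentEval (C k) (Complex.exp (x / n))
      - laurentEval (C k) 1 * (Complex.exp (x / 2) - Complex.exp (-x / 2)) ^ (2 * k)‖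
      ≤ (1 + D) / n * ((k : ℝ) ^ (p + 3) * w ^ k) := by
  subst hu
  have hn0 : (0:ℝ) < n := by exact_mod_cast hn
  have hk1 : (1:ℝ) ≤ (k:ℝ) := by exact_mod_cast hk
  have hkr : (k:ℝ) ≤ (n:ℝ) := by exact_mod_cast hkn
  have hx1 : ‖x‖ ≤ 1 := hx.trans hr1
  set s : ℂ := Complex.exp (x / 2) - Complex.exp (-x / 2) with hs_def
  have hns : ‖s‖ ≤ 8 * ‖x‖ := mmr_sinh_bound x hx1
  have hs2 : ‖s ^ 2‖ ≤ 64 * r ^ 2 := by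
    rw [norm_pow]
    nlinarith [norm_nonneg s, norm_nonneg x]
  have hkrn0 : 0 ≤ (k:ℝ) * r / n := by positivity
  have hkrn_r : (k:ℝ) * r / n ≤ r := by
    rw [div_le_iff₀ hn0]
    nlinarith
  -- bound on the j-th factor pieces
  have ht : ∀ j : ℕ, j ∈ Finset.Icc 1 k →
      ‖Complex.exp ((j : ℂ) * x / (2 * n)) - Complex.exp (-((j : ℂ) * x / (2 * n)))‖
        ≤ 8 * ((k:ℝ) * r / n) := by
    intro j hj
    obtain ⟨hj1, hjk⟩ := Finset.mem_Icc.mp hj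
    set z : ℂ := (j : ℂ) * x / (n : ℂ) with hz_def
    have hz_half : (j : ℂ) * x / (2 * n) = z / 2 := by
      rw [hz_def, div_div, mul_comm (2:ℂ) (n:ℂ)]
    have hz_norm : ‖z‖ = (j:ℝ) * ‖x‖ / n := by
      rw [hz_def, norm_div, norm_mul]
      simp
    have hjk' : (j:ℝ) ≤ (k:ℝ) := by exact_mod_cast hjk
    have hj0 : (0:ℝ) ≤ (j:ℝ) := Nat.cast_nonneg j
    have hz1 : ‖z‖ ≤ 1 := by
      rw [hz_norm, div_le_one hn0]
      nlinarith [norm_nonneg x]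
    have h8 := mmr_sinh_bound z hz1
    rw [hz_half]
    have hneghalf : -(z / 2) = -z / 2 := by ring
    rw [hneghalf]
    refine h8.trans ?_
    rw [hz_norm]
    have hnum : (j:ℝ) * ‖x‖ ≤ (k:ℝ) * r :=
      mul_le_mul hjk' hx (norm_nonneg x) (by linarith)
    have := (div_le_div_iff_of_pos_right hn0).mpr hnum
    linarith
  -- telescoping product bound
  have hKbound := mmr_prod_sub_pow k
    (fun j => s ^ 2 - (Complex.exp ((j : ℂ) * x / (2 * n))
      - Complex.exp (-((j : ℂ) * x / (2 * n)))) ^ 2)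
    (s ^ 2) (128 * r ^ 2) (64 * ((k:ℝ) * r / n) ^ 2)
    (by positivity) (by positivity)
    (hs2.trans (by nlinarith))
    (by
      intro j hj
      refine (norm_sub_le _ _).trans ?_
      have h1 := ht j hj
      have h0 := norm_nonneg (Complex.exp ((j : ℂ) * x / (2 * n))
          - Complex.exp (-((j : ℂ) * x / (2 * n))))
      have h2 : ‖(Complex.exp ((j : ℂ) * x / (2 * n))
          - Complex.exp (-((j : ℂ) * x / (2 * n)))) ^ 2‖ ≤ 64 * ((k:ℝ) * r / n) ^ 2 := by
        rw [norm_pow]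
        nlinarith
      have h4 : ((k:ℝ) * r / n) ^ 2 ≤ r ^ 2 := by nlinarith
      nlinarith [hs2])
    (by
      intro j hj
      have heq : s ^ 2 - (Complex.exp ((j : ℂ) * x / (2 * n))
          - Complex.exp (-((j : ℂ) * x / (2 * n)))) ^ 2 - s ^ 2
          = -((Complex.exp ((j : ℂ) * x / (2 * n))
          - Complex.exp (-((j : ℂ) * x / (2 * n)))) ^ 2) := by ring
      rw [heq, norm_neg, norm_pow]
      have h1 := ht j hj
      nlinarith [norm_nonneg (Complex.exp ((j : ℂ) * x / (2 * n))
        - Complex.exp (-((j : ℂ) * x / (2 * n))))])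
  have hKdef : cycKer n k x = ∏ j ∈ Finset.Icc 1 k,
      (s ^ 2 - (Complex.exp ((j : ℂ) * x / (2 * n))
        - Complex.exp (-((j : ℂ) * x / (2 * n)))) ^ 2) := rfl
  rw [← hKdef] at hKbound
  have hu0 : (0:ℝ) ≤ 128 * r ^ 2 := by positivity
  have hK2 : ‖cycKer n k x - s ^ (2 * k)‖ ≤ (k:ℝ) ^ 2 / n * (128 * r ^ 2) ^ k := by
    rw [pow_mul]
    refine hKbound.trans ?_
    have hpow : (128 * r ^ 2) ^ (k - 1) * (128 * r ^ 2) = (128 * r ^ 2) ^ k := by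
      rw [← pow_succ]
      congr 1
      omega
    have hnum : (k:ℝ) * (64 * ((k:ℝ) * r / n) ^ 2) ≤ (k:ℝ) ^ 2 / n * (128 * r ^ 2) := by
      have e1 : (k:ℝ) * (64 * ((k:ℝ) * r / n) ^ 2) = 64 * (k:ℝ) ^ 3 * r ^ 2 / (n:ℝ) ^ 2 := by
        field_simp
      have e2 : (k:ℝ) ^ 2 / n * (128 * r ^ 2) = 128 * (k:ℝ) ^ 2 * r ^ 2 / (n:ℝ) := by
        ring
      rw [e1, e2, div_le_div_iff₀ (by positivity) hn0]
      have hstep : (64:ℝ) * (k:ℝ) ^ 2 * r ^ 2 * n * (k:ℝ) ≤ 64 * (k:ℝ) ^ 2 * r ^ 2 * n * n :=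
        mul_le_mul_of_nonneg_left hkr (by positivity)
      nlinarith [hstep, (by positivity : (0:ℝ) ≤ 64 * (k:ℝ) ^ 2 * r ^ 2 * (n:ℝ) ^ 2)]
    calc (k:ℝ) * (64 * ((k:ℝ) * r / n) ^ 2) * (128 * r ^ 2) ^ (k - 1)
        ≤ ((k:ℝ) ^ 2 / n * (128 * r ^ 2)) * (128 * r ^ 2) ^ (k - 1) :=
          mul_le_mul_of_nonneg_right hnum (by positivity)
      _ = (k:ℝ) ^ 2 / n * (128 * r ^ 2) ^ k := by
          rw [mul_assoc, mul_comm (128 * r ^ 2) ((128 * r ^ 2) ^ (k - 1)), hpow]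
  -- evaluation bounds
  have hxn : ‖x / (n:ℂ)‖ = ‖x‖ / n := by
    rw [norm_div]
    simp
  have hsupK := hsupp k hk
  have hexp_arg : D * (k:ℝ) ^ 2 * ‖x / (n:ℂ)‖ ≤ D * k := by
    rw [hxn]
    have h : (k:ℝ) ^ 2 * ‖x‖ ≤ (k:ℝ) * n := by
      have h1 : (k:ℝ) ^ 2 * ‖x‖ ≤ (k:ℝ) ^ 2 * 1 := mul_le_mul_of_nonneg_left hx1 (by positivity)
      have h2 : (k:ℝ) * (k:ℝ) ≤ (k:ℝ) * n := mul_le_mul_of_nonneg_left hkr (by positivity)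
      nlinarith [h1, h2]
    calc D * (k:ℝ) ^ 2 * (‖x‖ / n) = D * ((k:ℝ) ^ 2 * ‖x‖ / n) := by ring
      _ ≤ D * k := mul_le_mul_of_nonneg_left ((div_le_iff₀ hn0).mpr h) hD.le
  have hdiv_arg : D * (k:ℝ) ^ 2 * ‖x / (n:ℂ)‖ ≤ D * (k:ℝ) ^ 2 / n := by
    rw [hxn]
    have h : D * (k:ℝ) ^ 2 * ‖x‖ ≤ D * (k:ℝ) ^ 2 := by
      have h1 : D * (k:ℝ) ^ 2 * ‖x‖ ≤ D * (k:ℝ) ^ 2 * 1 :=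
        mul_le_mul_of_nonneg_left hx1 (by positivity)
      linarith [h1]
    calc D * (k:ℝ) ^ 2 * (‖x‖ / n) = D * (k:ℝ) ^ 2 * ‖x‖ / n := by ring
      _ ≤ D * (k:ℝ) ^ 2 / n := (div_le_div_iff_of_pos_right hn0).mpr h
  have hL1 : laurentL1 (C k) ≤ Real.exp (A * k + B * Real.log k) := hnorm k hk
  have hE : ‖laurentEval (C k) (Complex.exp (x / n))‖
      ≤ Real.exp (A * k + B * Real.log k) * Real.exp (D * k) := by
    refine (mmr_laurent_exp_bound (C k) (x / n) (D * (k:ℝ) ^ 2) hsupK).trans ?_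
    exact mul_le_mul hL1 (Real.exp_le_exp.mpr hexp_arg) (Real.exp_pos _).le
      (Real.exp_pos _).le
  have hEd : ‖laurentEval (C k) (Complex.exp (x / n)) - laurentEval (C k) 1‖
      ≤ Real.exp (A * k + B * Real.log k) * (D * (k:ℝ) ^ 2 / n * Real.exp (D * k)) := by
    refine (mmr_laurent_exp_sub_one (C k) (x / n) (D * (k:ℝ) ^ 2) hsupK).trans ?_
    refine mul_le_mul hL1 ?_ (by positivity) (Real.exp_pos _).le
    exact mul_le_mul hdiv_arg (Real.exp_le_exp.mpr hexp_arg) (Real.exp_pos _).le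
      (by positivity)
  have hs2k : ‖s ^ (2 * k)‖ ≤ (128 * r ^ 2) ^ k := by
    rw [pow_mul, norm_pow]
    exact pow_le_pow_left₀ (norm_nonneg _) (hs2.trans (by nlinarith)) k
  -- assemble
  have hdec : cycKer n k x * laurentEval (C k) (Complex.exp (x / n))
      - laurentEval (C k) 1 * s ^ (2 * k)
      = (cycKer n k x - s ^ (2 * k)) * laurentEval (C k) (Complex.exp (x / n))
        + (laurentEval (C k) (Complex.exp (x / n)) - laurentEval (C k) 1) * s ^ (2 * k) := by
    ring
  rw [hdec]
  refine (norm_add_le _ _).trans ?_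
  rw [norm_mul, norm_mul]
  have hstep1 : ‖cycKer n k x - s ^ (2 * k)‖ * ‖laurentEval (C k) (Complex.exp (x / n))‖
      ≤ ((k:ℝ) ^ 2 / n * (128 * r ^ 2) ^ k)
        * (Real.exp (A * k + B * Real.log k) * Real.exp (D * k)) :=
    mul_le_mul hK2 hE (norm_nonneg _) (by positivity)
  have hstep2 : ‖laurentEval (C k) (Complex.exp (x / n)) - laurentEval (C k) 1‖ * ‖s ^ (2 * k)‖
      ≤ (Real.exp (A * k + B * Real.log k) * (D * (k:ℝ) ^ 2 / n * Real.exp (D * k)))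
        * (128 * r ^ 2) ^ k :=
    mul_le_mul hEd hs2k (norm_nonneg _) (by positivity)
  refine (add_le_add hstep1 hstep2).trans ?_
  have hcore2 : Real.exp (A * k + B * Real.log k) * Real.exp (D * k)
      * (128 * r ^ 2) ^ k * (k:ℝ) ^ 2 ≤ (k:ℝ) ^ (p + 3) * w ^ k :=
    mmr_core hu0 hw hp k hk 2 (by norm_num)
  have hfinal : ((k:ℝ) ^ 2 / n * (128 * r ^ 2) ^ k)
        * (Real.exp (A * k + B * Real.log k) * Real.exp (D * k))
      + (Real.exp (A * k + B * Real.log k) * (D * (k:ℝ) ^ 2 / n * Real.exp (D * k)))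
        * (128 * r ^ 2) ^ k
      = (1 + D) / n * (Real.exp (A * k + B * Real.log k) * Real.exp (D * k)
          * (128 * r ^ 2) ^ k * (k:ℝ) ^ 2) := by
    field_simp
  rw [hfinal]
  exact mul_le_mul_of_nonneg_left hcore2 (by positivity)

lemma mmr_tail_term_bound (C : ℕ → (ℤ →₀ ℤ)) (A B D : ℝ) (hD : 0 < D)
    (hnorm : ∀ k : ℕ, 1 ≤ k → laurentL1 (C k) ≤ Real.exp (A * k + B * Real.log k))
    (u w : ℝ) (hu0 : 0 ≤ u) (hw : u * Real.exp (A + D) = w) (p : ℕ) (hp : B ≤ p)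
    (k : ℕ) (hk : 1 ≤ k) (s : ℂ) (hs : ‖s‖ ^ 2 ≤ u) :
    ‖laurentEval (C k) 1 * s ^ (2 * k)‖ ≤ (k : ℝ) ^ (p + 3) * w ^ k := by
  have hk1 : (1:ℝ) ≤ (k:ℝ) := by exact_mod_cast hk
  rw [norm_mul, pow_mul, norm_pow]
  have h1 : ‖laurentEval (C k) 1‖ ≤ Real.exp (A * k + B * Real.log k) :=
    (mmr_laurent_one (C k)).trans (hnorm k hk)
  have h2 : ‖s ^ 2‖ ^ k ≤ u ^ k := by
    rw [norm_pow]
    exact pow_le_pow_left₀ (by positivity) hs k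
  have h3 : ‖laurentEval (C k) 1‖ * ‖s ^ 2‖ ^ k
      ≤ Real.exp (A * k + B * Real.log k) * u ^ k :=
    mul_le_mul h1 h2 (by positivity) (Real.exp_pos _).le
  refine h3.trans ?_
  have h4 : (1:ℝ) ≤ Real.exp (D * k) := Real.one_le_exp_iff.mpr (by positivity)
  have h5 : Real.exp (A * k + B * Real.log k) * u ^ k
      ≤ Real.exp (A * k + B * Real.log k) * Real.exp (D * k) * u ^ k * (k:ℝ) ^ 0 := by
    rw [pow_zero, mul_one]
    have hXu : 0 ≤ Real.exp (A * k + B * Real.log k) * u ^ k := by positivity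
    nlinarith [mul_le_mul_of_nonneg_left h4 hXu]
  exact h5.trans (mmr_core hu0 hw hp k hk 0 (by norm_num))


/-- Under the growth hypotheses on `(C_k)`, with
`f_n(α) = ∑_{k=0}^{n} K(n,k,α) · C_k(e^{α/n})` and
`g(α) = ∑_{k=0}^∞ C_k(1) (e^{α/2} − e^{−α/2})^{2k}` (which converges on some open
neighborhood of `0`), for every `m ≥ 0` the limit `lim_{n→∞} f_n^{(m)}(0)` exists and
equals `g^{(m)}(0)`. -/
theorem derivative_convergence_MMR (C : ℕ → (ℤ →₀ ℤ)) (A B D : ℝ)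
    (hA : 0 < A) (hB : 0 < B) (hD : 0 < D)
    (hnorm : ∀ k : ℕ, 1 ≤ k → laurentL1 (C k) ≤ Real.exp (A * k + B * Real.log k))
    (hsupp : ∀ k : ℕ, 1 ≤ k → ∀ j ∈ (C k).support, |(j : ℝ)| ≤ D * (k : ℝ) ^ 2)
    (f : ℕ → ℂ → ℂ)
    (hf : ∀ n : ℕ, ∀ α : ℂ,
      f n α = ∑ k ∈ Finset.range (n + 1), cycKer n k α * laurentEval (C k) (Complex.exp (α / n)))
    (g : ℂ → ℂ)
    (hg : ∀ α : ℂ, g α = ∑' k : ℕ,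
      laurentEval (C k) 1 * (Complex.exp (α / 2) - Complex.exp (-α / 2)) ^ (2 * k)) :
    ∀ m : ℕ, Filter.Tendsto (fun n : ℕ => iteratedDeriv m (f n) 0) Filter.atTop
      (nhds (iteratedDeriv m g 0)) := by
  -- constants
  set r : ℝ := min 1 (Real.exp (-(A + D)) / 256) with hr_def
  have hr0 : 0 < r := lt_min one_pos (by positivity)
  have hr1 : r ≤ 1 := min_le_left _ _
  set u : ℝ := 128 * r ^ 2 with hu_def
  set w : ℝ := u * Real.exp (A + D) with hw_def
  have hu0 : (0:ℝ) ≤ u := by rw [hu_def]; positivity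
  have hw0 : (0:ℝ) ≤ w := by rw [hw_def]; positivity
  have hw1 : w < 1 := by
    have hrr : r ≤ Real.exp (-(A + D)) / 256 := min_le_right _ _
    have hr2 : r ^ 2 ≤ r * 1 := by nlinarith
    have hur : u ≤ 128 * r := by rw [hu_def]; nlinarith
    have hue : u ≤ Real.exp (-(A + D)) / 2 := by
      refine hur.trans ?_
      linarith
    have hprod : Real.exp (-(A + D)) * Real.exp (A + D) = 1 := by
      rw [← Real.exp_add, neg_add_cancel, Real.exp_zero]
    have hEpos : 0 < Real.exp (A + D) := Real.exp_pos _
    calc w = u * Real.exp (A + D) := hw_def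
      _ ≤ Real.exp (-(A + D)) / 2 * Real.exp (A + D) :=
          mul_le_mul_of_nonneg_right hue hEpos.le
      _ = 1 / 2 := by rw [div_mul_eq_mul_div, hprod]
      _ < 1 := by norm_num
  set p : ℕ := ⌈B⌉₊ with hp_def
  have hpB : B ≤ (p:ℝ) := Nat.le_ceil B
  set Mk : ℕ → ℝ := fun k => (k:ℝ) ^ (p + 3) * w ^ k with hMk_def
  have hMk0 : ∀ k, 0 ≤ Mk k := fun k => by
    rw [hMk_def]
    positivity
  have hMk_sum : Summable Mk := by
    have hs := summable_pow_mul_geometric_of_norm_lt_one (p + 3)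
      (r := w) (by rwa [Real.norm_eq_abs, abs_of_nonneg hw0])
    exact hs
  set S : ℝ := ∑' k, Mk k with hS_def
  set J0 : ℝ := ∑ j ∈ (C 0).support, |(j:ℝ)| with hJ0_def
  have hJ0_0 : 0 ≤ J0 := Finset.sum_nonneg fun _ _ => abs_nonneg _
  have hJ0 : ∀ j ∈ (C 0).support, |(j:ℝ)| ≤ J0 := fun j hj =>
    Finset.single_le_sum (f := fun i : ℤ => |(i:ℝ)|) (fun i _ => abs_nonneg _) hj
  set C0 : ℝ := laurentL1 (C 0) * (J0 * Real.exp J0) with hC0_def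
  have hC0_0 : 0 ≤ C0 := by
    rw [hC0_def]
    have := mmr_L1_nonneg (C 0)
    positivity
  set T : ℕ → ℝ := fun n => ∑' i, Mk (i + (n + 1)) with hT_def
  set b : ℕ → ℝ := fun n => (1 + D) * S / n + C0 / n + T n with hb_def
  -- s-bound for points in the ball
  have hsxb : ∀ x : ℂ, ‖x‖ ≤ r →
      ‖Complex.exp (x / 2) - Complex.exp (-x / 2)‖ ^ 2 ≤ u := by
    intro x hx
    have h8 := mmr_sinh_bound x (hx.trans hr1)
    rw [hu_def]
    nlinarith [norm_nonneg (Complex.exp (x / 2) - Complex.exp (-x / 2)), norm_nonneg x]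
  -- summability of the g-series
  have hsum : ∀ x : ℂ, ‖x‖ ≤ r → Summable (fun k =>
      laurentEval (C k) 1 * (Complex.exp (x / 2) - Complex.exp (-x / 2)) ^ (2 * k)) := by
    intro x hx
    rw [← summable_nat_add_iff 1]
    refine Summable.of_norm_bounded (g := fun i => Mk (i + 1))
      ((summable_nat_add_iff 1).mpr hMk_sum) ?_
    intro i
    have := mmr_tail_term_bound C A B D hD hnorm u w hu0 hw_def.symm p hpB
      (i + 1) (by omega) _ (hsxb x hx)
    simpa [hMk_def] using this
  -- the key uniform estimate
  have key : ∀ n : ℕ, 1 ≤ n → ∀ x : ℂ, ‖x‖ ≤ r → ‖f n x - g x‖ ≤ b n := by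
    intro n hn x hx
    have hn0 : (0:ℝ) < n := by exact_mod_cast hn
    have hgx0 := hg x
    have hsummable := hsum x hx
    set sx : ℂ := Complex.exp (x / 2) - Complex.exp (-x / 2) with hsx
    set q : ℂ := Complex.exp (x / (n:ℂ)) with hq
    set tail : ℂ := ∑' i, laurentEval (C (i + (n + 1))) 1 * sx ^ (2 * (i + (n + 1)))
      with htail_def
    have hgx : g x = (∑ k ∈ Finset.range (n + 1), laurentEval (C k) 1 * sx ^ (2 * k))
        + tail := by
      rw [hgx0, htail_def]
      exact (Summable.sum_add_tsum_nat_add (n + 1) hsummable).symm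
    have hdiff : f n x - g x = (∑ k ∈ Finset.range (n + 1),
        (cycKer n k x * laurentEval (C k) q - laurentEval (C k) 1 * sx ^ (2 * k))) - tail := by
      rw [hf n x, hgx, Finset.sum_sub_distrib]
      ring
    rw [hdiff]
    refine (norm_sub_le _ _).trans ?_
    have htail_bound : ‖tail‖ ≤ T n := by
      rw [htail_def, hT_def]
      have hbnd : ∀ i : ℕ, ‖laurentEval (C (i + (n + 1))) 1 * sx ^ (2 * (i + (n + 1)))‖
          ≤ Mk (i + (n + 1)) := by
        intro i
        have := mmr_tail_term_bound C A B D hD hnorm u w hu0 hw_def.symm p hpB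
          (i + (n + 1)) (by omega) sx (hsxb x hx)
        simpa [hMk_def] using this
      have hsn : Summable (fun i => ‖laurentEval (C (i + (n + 1))) 1
          * sx ^ (2 * (i + (n + 1)))‖) :=
        Summable.of_nonneg_of_le (fun _ => norm_nonneg _) hbnd
          ((summable_nat_add_iff (n + 1)).mpr hMk_sum)
      refine (norm_tsum_le_tsum_norm hsn).trans ?_
      exact Summable.tsum_le_tsum hbnd hsn ((summable_nat_add_iff (n + 1)).mpr hMk_sum)
    have hsum_est : (∑ k ∈ Finset.range (n + 1),
        ‖cycKer n k x * laurentEval (C k) q - laurentEval (C k) 1 * sx ^ (2 * k)‖)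
        ≤ (1 + D) * S / n + C0 / n := by
      rw [Finset.sum_range_succ']
      have h0bound : ‖cycKer n 0 x * laurentEval (C 0) q
          - laurentEval (C 0) 1 * sx ^ (2 * 0)‖ ≤ C0 / n := by
        have hcyc0 : cycKer n 0 x = 1 := by
          unfold cycKer
          rw [Finset.Icc_eq_empty (by omega)]
          exact Finset.prod_empty
        rw [hcyc0, one_mul, mul_zero, pow_zero, mul_one]
        have hx_n : ‖x / (n:ℂ)‖ = ‖x‖ / n := by
          rw [norm_div]
          simp
        have hbound := mmr_laurent_exp_sub_one (C 0) (x / (n:ℂ)) J0 hJ0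
        rw [← hq] at hbound
        refine hbound.trans ?_
        have hxn1 : ‖x / (n:ℂ)‖ ≤ 1 / n := by
          rw [hx_n]
          exact (div_le_div_iff_of_pos_right hn0).mpr (hx.trans hr1)
        have hxn2 : ‖x / (n:ℂ)‖ ≤ 1 := hxn1.trans (by
          rw [div_le_one hn0]
          exact_mod_cast hn)
        have harg : J0 * ‖x / (n:ℂ)‖ ≤ J0 * (1 / n) :=
          mul_le_mul_of_nonneg_left hxn1 hJ0_0
        have harg2 : J0 * ‖x / (n:ℂ)‖ ≤ J0 := by
          have := mul_le_mul_of_nonneg_left hxn2 hJ0_0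
          simpa using this
        have hmain : J0 * ‖x / (n:ℂ)‖ * Real.exp (J0 * ‖x / (n:ℂ)‖)
            ≤ J0 * (1 / n) * Real.exp J0 := by
          refine mul_le_mul harg (Real.exp_le_exp.mpr harg2) (Real.exp_pos _).le ?_
          positivity
        have := mul_le_mul_of_nonneg_left hmain (mmr_L1_nonneg (C 0))
        refine this.trans ?_
        rw [hC0_def]
        rw [div_eq_mul_inv]
        ring_nf
        nlinarith [mmr_L1_nonneg (C 0), Real.exp_pos J0, hJ0_0, hn0]
      have hibound : ∀ i ∈ Finset.range n,
          ‖cycKer n (i + 1) x * laurentEval (C (i + 1)) q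
            - laurentEval (C (i + 1)) 1 * sx ^ (2 * (i + 1))‖
          ≤ (1 + D) / n * Mk (i + 1) := by
        intro i hi
        have hin : i + 1 ≤ n := Finset.mem_range.mp hi
        have := mmr_term_bound C A B D hD hnorm hsupp r u w p hr0 hr1 hu_def
          hw_def.symm hpB n (i + 1) hn (by omega) hin x hx
        rw [← hsx, ← hq] at this
        simpa [hMk_def] using this
      have hsum1 : (∑ i ∈ Finset.range n,
          ‖cycKer n (i + 1) x * laurentEval (C (i + 1)) q
            - laurentEval (C (i + 1)) 1 * sx ^ (2 * (i + 1))‖)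
          ≤ ∑ i ∈ Finset.range n, (1 + D) / n * Mk (i + 1) :=
        Finset.sum_le_sum hibound
      have hsum2 : (∑ i ∈ Finset.range n, (1 + D) / n * Mk (i + 1))
          = (1 + D) / n * ∑ i ∈ Finset.range n, Mk (i + 1) := by
        rw [Finset.mul_sum]
      have hsum3 : (∑ i ∈ Finset.range n, Mk (i + 1)) ≤ S := by
        have hshift : Summable (fun i => Mk (i + 1)) := (summable_nat_add_iff 1).mpr hMk_sum
        have h1 : (∑ i ∈ Finset.range n, Mk (i + 1)) ≤ ∑' i, Mk (i + 1) :=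
          Summable.sum_le_tsum (Finset.range n) (fun i _ => hMk0 _) hshift
        have h2 := Summable.sum_add_tsum_nat_add 1 hMk_sum
        have h3 : (0:ℝ) ≤ ∑ i ∈ Finset.range 1, Mk i :=
          Finset.sum_nonneg fun i _ => hMk0 i
        rw [hS_def]
        linarith
      have hfinal : (1 + D) / n * ∑ i ∈ Finset.range n, Mk (i + 1) ≤ (1 + D) * S / n := by
        have := mul_le_mul_of_nonneg_left hsum3 (by positivity : (0:ℝ) ≤ (1 + D) / n)
        calc (1 + D) / n * ∑ i ∈ Finset.range n, Mk (i + 1) ≤ (1 + D) / n * S := this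
          _ = (1 + D) * S / n := by ring
      calc (∑ i ∈ Finset.range n,
          ‖cycKer n (i + 1) x * laurentEval (C (i + 1)) q
            - laurentEval (C (i + 1)) 1 * sx ^ (2 * (i + 1))‖)
          + ‖cycKer n 0 x * laurentEval (C 0) q - laurentEval (C 0) 1 * sx ^ (2 * 0)‖
          ≤ (1 + D) / n * ∑ i ∈ Finset.range n, Mk (i + 1) + C0 / n := by
            rw [← hsum2]
            exact add_le_add hsum1 h0bound
        _ ≤ (1 + D) * S / n + C0 / n := add_le_add hfinal (le_refl _)
    calc ‖∑ k ∈ Finset.range (n + 1),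
          (cycKer n k x * laurentEval (C k) q - laurentEval (C k) 1 * sx ^ (2 * k))‖ + ‖tail‖
        ≤ (∑ k ∈ Finset.range (n + 1),
          ‖cycKer n k x * laurentEval (C k) q - laurentEval (C k) 1 * sx ^ (2 * k)‖) + ‖tail‖ :=
          add_le_add (norm_sum_le _ _) (le_refl _)
      _ ≤ ((1 + D) * S / n + C0 / n) + T n := add_le_add hsum_est htail_bound
      _ = b n := by rw [hb_def]
  -- b tends to zero
  have hb0 : Filter.Tendsto b Filter.atTop (nhds 0) := by
    have h1 : Filter.Tendsto (fun n : ℕ => (1 + D) * S / n) Filter.atTop (nhds 0) :=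
      tendsto_const_div_atTop_nhds_zero_nat _
    have h2 : Filter.Tendsto (fun n : ℕ => C0 / n) Filter.atTop (nhds 0) :=
      tendsto_const_div_atTop_nhds_zero_nat _
    have h3 : Filter.Tendsto T Filter.atTop (nhds 0) := by
      have h4 := (tendsto_sum_nat_add Mk).comp (Filter.tendsto_add_atTop_nat 1)
      exact h4
    have := (h1.add h2).add h3
    simpa using this
  -- uniform convergence on the ball
  have hTU : TendstoUniformlyOn f g Filter.atTop (Metric.ball (0:ℂ) r) := by
    rw [Metric.tendstoUniformlyOn_iff]
    intro ε hε
    have hev1 : ∀ᶠ n : ℕ in Filter.atTop, b n < ε := hb0.eventually_lt_const hε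
    filter_upwards [hev1, Filter.eventually_ge_atTop 1] with n hbn hn1
    intro x hxball
    have hxr : ‖x‖ ≤ r := by
      have hd := Metric.mem_ball.mp hxball
      rw [dist_zero_right] at hd
      exact hd.le
    have hk := key n hn1 x hxr
    rw [dist_eq_norm, norm_sub_rev]
    exact lt_of_le_of_lt hk hbn
  have hTLU := hTU.tendstoLocallyUniformlyOn
  have hfd : ∀ n, Differentiable ℂ (f n) := by
    intro n
    have hfn : f n = fun α => ∑ k ∈ Finset.range (n + 1),
        cycKer n k α * laurentEval (C k) (Complex.exp (α / n)) := funext (hf n)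
    rw [hfn]
    exact mmr_f_diff C n
  intro m
  have hiter := mmr_iterated_tendsto Metric.isOpen_ball hfd hTLU m
  exact hiter.tendsto_at (Metric.mem_ball_self hr0)
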